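/- If a sequence (x_n) in a metric vector space is I-convergent to η and F_γ = B_r(γ) for fixed r ≥ 0, then L_x(I,𝓕) = B_r(η): every γ with d(γ,η) ≤ r is an (I,𝓕)-limit, and no γ with d(γ,η) > r is. -/

import Mathlib

/-- An ideal on ω: closed under subsets and finite unions, contains all finite sets,
and does not contain ω itself. -/
def IsIdeal (I : Set (Set ℕ)) : Prop :=
  (∀ A B : Set ℕ, A ⊆ B → B ∈ I → A ∈ I) ∧
  (∀ A ∈ I, ∀ B ∈ I, A ∪ B ∈ I) ∧
  (∀ A : Set ℕ, A.Finite → A ∈ I) ∧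
  (Set.univ : Set ℕ) ∉ I

/-- `(I, F)`-convergence of the sequence `x` with roughness set `F`:
for every open `U ⊇ F`, the set `{n | x n ∉ U}` belongs to `I`. -/
def RoughLim {X : Type*} [TopologicalSpace X] (I : Set (Set ℕ)) (F : Set X)
    (x : ℕ → X) : Prop :=
  ∀ U : Set X, IsOpen U → F ⊆ U → {n | x n ∉ U} ∈ I

/-- `p` is an `I`-cluster point of `x`. -/
def IdealClusterPt {X : Type*} [TopologicalSpace X] (I : Set (Set ℕ)) (x : ℕ → X)
    (p : X) : Prop :=
  ∀ U : Set X, IsOpen U → p ∈ U → {n | x n ∈ U} ∉ I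

theorem stmt18 {X : Type*} [AddCommGroup X] [Module ℝ X] [MetricSpace X]
    [IsTopologicalAddGroup X] [ContinuousSMul ℝ X]
    (I : Set (Set ℕ)) (hI : IsIdeal I) (x : ℕ → X) (η : X)
    (hconv : ∀ U : Set X, IsOpen U → η ∈ U → {n | x n ∉ U} ∈ I)
    (r : ℝ) (hr : 0 ≤ r) :
    {γ | RoughLim I (Metric.closedBall γ r) x} = Metric.closedBall η r := by
  ext γ
  simp only [Set.mem_setOf_eq, Metric.mem_closedBall]
  constructor
  · intro h
    by_contra hd
    push_neg at hd
    set s : ℝ := (r + dist γ η) / 2 with hs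
    have hrs : r < s := by simp [hs]; linarith
    have hsd : s < dist γ η := by simp [hs]; linarith
    have hU : {n | x n ∉ Metric.ball γ s} ∈ I := by
      apply h _ Metric.isOpen_ball
      exact Metric.closedBall_subset_ball hrs
    have hV : {n | x n ∉ Metric.ball η (dist γ η - s)} ∈ I := by
      apply hconv _ Metric.isOpen_ball
      simp [sub_pos.mpr hsd]
    have huniv : {n | x n ∉ Metric.ball γ s} ∪ {n | x n ∉ Metric.ball η (dist γ η - s)}
        = (Set.univ : Set ℕ) := by
      ext n
      simp only [Set.mem_union, Set.mem_setOf_eq, Set.mem_univ, iff_true]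
      by_contra hc
      push_neg at hc
      obtain ⟨h1, h2⟩ := hc
      rw [Metric.mem_ball] at h1 h2
      have := dist_triangle γ (x n) η
      rw [dist_comm γ (x n)] at this
      linarith
    have := hI.2.1 _ hU _ hV
    rw [huniv] at this
    exact hI.2.2.2 this
  · intro h U hUopen hsub
    apply hconv U hUopen
    apply hsub
    rw [Metric.mem_closedBall, dist_comm]; exact h
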